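/- Assume that for every skew-symmetrizable initial matrix the sign-coherence property holds (every C-matrix of every pattern is column sign-coherent). If for some vertex t and index i the g-vector g_{i;t} has all entries ≥ 0 (equivalently, the ray ℝ_{≥0} g_{i;t} meets the nonnegative orthant in more than the origin), then g_{i;t} equals a standard basis vector e_ℓ for some ℓ ∈ {1,…,n}. -/

import Mathlib

open Matrix

namespace ClusterPattern

variable {ι : Type*} [Fintype ι] [DecidableEq ι]

/-- Entrywise positive part `[A]₊`. -/
def posPart (A : Matrix ι ι ℤ) : Matrix ι ι ℤ := Matrix.of fun i j => max (A i j) 0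

/-- `A^{•k}`: all columns other than the `k`-th set to `0`. -/
def colSel (k : ι) (A : Matrix ι ι ℤ) : Matrix ι ι ℤ :=
  Matrix.of fun i j => if j = k then A i j else 0

/-- `A^{k•}`: all rows other than the `k`-th set to `0`. -/
def rowSel (k : ι) (A : Matrix ι ι ℤ) : Matrix ι ι ℤ :=
  Matrix.of fun i j => if i = k then A i j else 0

/-- `J_k`: identity with `k`-th diagonal entry replaced by `-1`. -/
def Jmat (k : ι) : Matrix ι ι ℤ := Matrix.diagonal fun i => if i = k then -1 else 1

/-- A skew-symmetrizable integer matrix. -/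
def IsSkewSymmetrizable (B : Matrix ι ι ℤ) : Prop :=
  ∃ D : ι → ℚ, (∀ i, 0 < D i) ∧ ∀ i j, D i * (B i j : ℚ) = -(D j * (B j i : ℚ))

/-- Matrix mutation `μ_k`. -/
def mutate (k : ι) (B : Matrix ι ι ℤ) : Matrix ι ι ℤ :=
  Matrix.of fun i j => if i = k ∨ j = k then -B i j
    else B i j + B i k * max (B k j) 0 + max (-B i k) 0 * B k j

/-- The exchange matrix `B_t` at the vertex reached from `B0` along the path `w`. -/
def Bmat (B0 : Matrix ι ι ℤ) (w : List ι) : Matrix ι ι ℤ :=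
  w.foldl (fun B k => mutate k B) B0

/-- One mutation step of a `C`-matrix. -/
def Cstep (B C : Matrix ι ι ℤ) (k : ι) : Matrix ι ι ℤ :=
  C * Jmat k + C * rowSel k (posPart B) + colSel k (posPart (-C)) * B

/-- One mutation step of a `G`-matrix. -/
def Gstep (B0 B C G : Matrix ι ι ℤ) (k : ι) : Matrix ι ι ℤ :=
  G * Jmat k + G * colSel k (posPart (-B)) - B0 * colSel k (posPart (-C))

/-- The `C`-matrix `C_t` at the vertex reached from the initial matrix `B0` along `w`. -/
def Cmat (B0 : Matrix ι ι ℤ) (w : List ι) : Matrix ι ι ℤ :=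
  (w.foldl (fun p k => (mutate k p.1, Cstep p.1 p.2 k))
    ((B0, 1) : Matrix ι ι ℤ × Matrix ι ι ℤ)).2

/-- The `G`-matrix `G_t` at the vertex reached from the initial matrix `B0` along `w`. -/
def Gmat (B0 : Matrix ι ι ℤ) (w : List ι) : Matrix ι ι ℤ :=
  (w.foldl (fun p k => (mutate k p.1, Cstep p.1 p.2.1 k, Gstep B0 p.1 p.2.1 p.2.2 k))
    ((B0, 1, 1) : Matrix ι ι ℤ × Matrix ι ι ℤ × Matrix ι ι ℤ)).2.2

/-- A nonzero integer vector with all entries nonnegative. -/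
def IsPositiveVec (v : ι → ℤ) : Prop := v ≠ 0 ∧ ∀ i, 0 ≤ v i

/-- A nonzero integer vector with all entries nonpositive. -/
def IsNegativeVec (v : ι → ℤ) : Prop := v ≠ 0 ∧ ∀ i, v i ≤ 0

/-- Every column is a positive or a negative vector. -/
def ColSignCoherent (M : Matrix ι ι ℤ) : Prop :=
  ∀ j, IsPositiveVec (fun i => M i j) ∨ IsNegativeVec (fun i => M i j)

/-- Every row is a positive or a negative vector. -/
def RowSignCoherent (M : Matrix ι ι ℤ) : Prop :=
  ∀ i, IsPositiveVec (fun j => M i j) ∨ IsNegativeVec (fun j => M i j)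


set_option linter.unusedSectionVars false
set_option maxHeartbeats 1000000

section Lemmas

lemma maxswap {d e x y : ℚ} (hd : 0 ≤ d) (he : 0 ≤ e) (h : d * x = -(e * y)) :
    d * max (-x) 0 = e * max y 0 := by
  rw [mul_max_of_nonneg _ _ hd, mul_max_of_nonneg _ _ he, mul_zero, mul_zero, mul_neg, h,
    neg_neg]

lemma mul_Jmat_apply (C : Matrix ι ι ℤ) (k i j : ι) :
    (C * Jmat k) i j = (if j = k then -1 else 1) * C i j := by
  rw [Jmat, Matrix.mul_diagonal, mul_comm]

lemma mul_rowSel_apply (C P : Matrix ι ι ℤ) (k i j : ι) :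
    (C * rowSel k P) i j = C i k * P k j := by
  simp [Matrix.mul_apply, rowSel, mul_ite]

lemma colSel_mul_apply (P B : Matrix ι ι ℤ) (k i j : ι) :
    (colSel k P * B) i j = P i k * B k j := by
  simp [Matrix.mul_apply, colSel, ite_mul]

lemma mul_colSel_apply (G P : Matrix ι ι ℤ) (k i j : ι) :
    (G * colSel k P) i j = if j = k then ∑ m, G i m * P m k else 0 := by
  by_cases h : j = k <;> simp [Matrix.mul_apply, colSel, h]

lemma Cstep_apply (B C : Matrix ι ι ℤ) (k i j : ι) :
    Cstep B C k i j = (if j = k then -1 else 1) * C i j + C i k * max (B k j) 0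
      + max (-C i k) 0 * B k j := by
  simp only [Cstep, Matrix.add_apply, mul_Jmat_apply, mul_rowSel_apply, colSel_mul_apply,
    posPart, Matrix.of_apply, Matrix.neg_apply]

lemma Gstep_apply (B0 B C G : Matrix ι ι ℤ) (k i j : ι) :
    Gstep B0 B C G k i j = (if j = k then -1 else 1) * G i j +
      (if j = k then (∑ m, G i m * max (-B m k) 0) - ∑ m, B0 i m * max (-C m k) 0 else 0) := by
  simp only [Gstep, Matrix.sub_apply, Matrix.add_apply, mul_Jmat_apply, mul_colSel_apply,
    posPart, Matrix.of_apply, Matrix.neg_apply]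
  by_cases h : j = k <;> simp [h] <;> ring

-- fold lemmas
lemma Bmat_concat (B0 : Matrix ι ι ℤ) (w : List ι) (k : ι) :
    Bmat B0 (w ++ [k]) = mutate k (Bmat B0 w) := by
  simp [Bmat]

lemma cfold_fst (w : List ι) (B C : Matrix ι ι ℤ) :
    (w.foldl (fun p k => (mutate k p.1, Cstep p.1 p.2 k)) (B, C)).1 = Bmat B w := by
  induction w generalizing B C with
  | nil => rfl
  | cons k w ih => simpa [Bmat] using ih (mutate k B) (Cstep B C k)

lemma Cmat_concat (B0 : Matrix ι ι ℤ) (w : List ι) (k : ι) :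
    Cmat B0 (w ++ [k]) = Cstep (Bmat B0 w) (Cmat B0 w) k := by
  unfold Cmat
  rw [List.foldl_append]
  simp only [List.foldl_cons, List.foldl_nil]
  rw [cfold_fst]

lemma gfold_fst (B0 : Matrix ι ι ℤ) (w : List ι) (B C G : Matrix ι ι ℤ) :
    (w.foldl (fun p k => (mutate k p.1, Cstep p.1 p.2.1 k, Gstep B0 p.1 p.2.1 p.2.2 k))
      (B, C, G)).1 = Bmat B w := by
  induction w generalizing B C G with
  | nil => rfl
  | cons k w ih => simpa [Bmat] using ih (mutate k B) (Cstep B C k) (Gstep B0 B C G k)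

lemma gfold_snd (B0 : Matrix ι ι ℤ) (w : List ι) (B C G : Matrix ι ι ℤ) :
    (w.foldl (fun p k => (mutate k p.1, Cstep p.1 p.2.1 k, Gstep B0 p.1 p.2.1 p.2.2 k))
      (B, C, G)).2.1 = (w.foldl (fun p k => (mutate k p.1, Cstep p.1 p.2 k)) (B, C)).2 := by
  induction w generalizing B C G with
  | nil => rfl
  | cons k w ih => simpa using ih (mutate k B) (Cstep B C k) (Gstep B0 B C G k)

lemma Gmat_concat (B0 : Matrix ι ι ℤ) (w : List ι) (k : ι) :
    Gmat B0 (w ++ [k]) =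
      Gstep B0 (Bmat B0 w) (Cmat B0 w) (Gmat B0 w) k := by
  unfold Gmat
  rw [List.foldl_append]
  simp only [List.foldl_cons, List.foldl_nil]
  rw [gfold_fst, gfold_snd]
  rfl


section Step
variable (D : ι → ℚ) (B : Matrix ι ι ℤ) (k : ι)


lemma mutate_apply_or {i j : ι} (h : i = k ∨ j = k) : mutate k B i j = -B i j := by
  simp [mutate, h]

lemma mutate_apply_not {i j : ι} (hi : ¬i = k) (hj : ¬j = k) :
    mutate k B i j = B i j + B i k * max (B k j) 0 + max (-B i k) 0 * B k j := by
  simp [mutate, hi, hj]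

lemma step_skew (hD : ∀ i, 0 < D i)
    (hskew : ∀ i j, D i * (B i j : ℚ) = -(D j * (B j i : ℚ))) :
    ∀ i j, D i * ((mutate k B) i j : ℚ) = -(D j * ((mutate k B) j i : ℚ)) := by
  have hsw : ∀ a b, D a * max (-(B a b : ℚ)) 0 = D b * max ((B b a : ℚ)) 0 := by
    intro a b; exact maxswap (hD a).le (hD b).le (hskew a b)
  intro i j
  by_cases hik : i = k
  · rw [mutate_apply_or B k (Or.inl hik), mutate_apply_or B k (Or.inr hik)]
    push_cast
    linear_combination -hskew i j
  · by_cases hjk : j = k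
    · rw [mutate_apply_or B k (Or.inr hjk), mutate_apply_or B k (Or.inl hjk)]
      push_cast
      linear_combination -hskew i j
    · rw [mutate_apply_not B k hik hjk, mutate_apply_not B k hjk hik]
      push_cast
      linear_combination hskew i j + (max ((B k j : ℚ)) 0) * hskew i k
        + ((B k j : ℚ)) * hsw i k + (max ((B k i : ℚ)) 0) * hskew j k + ((B k i : ℚ)) * hsw j k

lemma mutate_key (ε : ℤ) (hε : ε = 1 ∨ ε = -1) (hBkk : B k k = 0) (m j : ι) :
    (if m = k then -1 else 1) * (mutate k B) m j
      + max (-(ε * B m k)) 0 * (mutate k B) k j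
    = (if j = k then -1 else 1) * B m j + max (ε * B k j) 0 * B m k := by
  rw [mutate_apply_or B k (Or.inl rfl)]
  by_cases hmk : m = k
  · rw [if_pos hmk, mutate_apply_or B k (Or.inl hmk), hmk, hBkk]
    by_cases hjk : j = k
    · rw [if_pos hjk, hjk, hBkk]; simp
    · rw [if_neg hjk]; simp
  · rw [if_neg hmk]
    by_cases hjk : j = k
    · rw [if_pos hjk, hjk, mutate_apply_or B k (Or.inr rfl), hBkk]
      rcases hε with h | h <;> subst h <;> simp
    · rw [if_neg hjk, mutate_apply_not B k hmk hjk]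
      rcases hε with h | h <;> subst h
      · simp only [one_mul, neg_mul, neg_neg]
        ring
      · simp only [one_mul, neg_mul, neg_neg]
        have hQ : max (-B m k) 0 = max (B m k) 0 - B m k := by omega
        have hS : max (-B k j) 0 = max (B k j) 0 - B k j := by omega
        rw [hQ, hS]
        ring


lemma key_ds (C G : Matrix ι ι ℤ) (q : ι → ℚ)
    (hI3 : ∀ a b, (∑ l, D l * (C l a : ℚ) * (G l b : ℚ)) = if a = b then D a else 0) (a : ι) :
    (∑ l, D l * (C l a : ℚ) * (∑ p, (G l p : ℚ) * q p)) = D a * q a := by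
  calc (∑ l, D l * (C l a : ℚ) * (∑ p, (G l p : ℚ) * q p))
      = ∑ l, ∑ p, (D l * (C l a : ℚ) * (G l p : ℚ)) * q p := by
        refine Finset.sum_congr rfl fun l _ => ?_
        rw [Finset.mul_sum]
        exact Finset.sum_congr rfl fun p _ => by ring
    _ = ∑ p, (∑ l, D l * (C l a : ℚ) * (G l p : ℚ)) * q p := by
        rw [Finset.sum_comm]
        exact Finset.sum_congr rfl fun p _ => by rw [Finset.sum_mul]
    _ = ∑ p, (if a = p then D a else 0) * q p := by
        exact Finset.sum_congr rfl fun p _ => by rw [hI3]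
    _ = D a * q a := by
        simp [ite_mul, Finset.sum_ite_eq]

lemma step_I3 (C G C' G' : Matrix ι ι ℤ) (ε : ℤ)
    (hD : ∀ i, 0 < D i) (hBkk : B k k = 0)
    (hskew : ∀ i j, D i * (B i j : ℚ) = -(D j * (B j i : ℚ)))
    (hI3 : ∀ a b, (∑ l, D l * (C l a : ℚ) * (G l b : ℚ)) = if a = b then D a else 0)
    (hC' : ∀ i j, (C' i j : ℚ) = (if j = k then -1 else 1) * (C i j : ℚ)
      + (C i k : ℚ) * max ((ε : ℚ) * (B k j : ℚ)) 0)
    (hG' : ∀ i j, (G' i j : ℚ) = (if j = k then -1 else 1) * (G i j : ℚ)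
      + (if j = k then ∑ p, (G i p : ℚ) * max (-((ε : ℚ) * (B p k : ℚ))) 0 else 0)) :
    ∀ a b, (∑ l, D l * (C' l a : ℚ) * (G' l b : ℚ)) = if a = b then D a else 0 := by
  have hBkkq : (B k k : ℚ) = 0 := by exact_mod_cast hBkk
  have hqk : max (-((ε : ℚ) * (B k k : ℚ))) 0 = 0 := by rw [hBkkq]; simp
  have hpk : max ((ε : ℚ) * (B k k : ℚ)) 0 = 0 := by rw [hBkkq]; simp
  have hsw : ∀ a, D a * max (-((ε : ℚ) * (B a k : ℚ))) 0
      = D k * max ((ε : ℚ) * (B k a : ℚ)) 0 := by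
    intro a
    apply maxswap (hD a).le (hD k).le
    linear_combination (ε : ℚ) * hskew a k
  have key : ∀ a, (∑ l, D l * (C l a : ℚ)
      * (∑ p, (G l p : ℚ) * max (-((ε : ℚ) * (B p k : ℚ))) 0))
      = D a * max (-((ε : ℚ) * (B a k : ℚ))) 0 :=
    fun a => key_ds D C G _ hI3 a
  have hG'k : ∀ l, (G' l k : ℚ) = (-1) * (G l k : ℚ)
      + ∑ p, (G l p : ℚ) * max (-((ε : ℚ) * (B p k : ℚ))) 0 := by
    intro l; rw [hG']; simp
  intro a b
  by_cases hbk : b = k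
  · rw [hbk]
    have expand : (∑ l, D l * (C' l a : ℚ) * (G' l k : ℚ))
        = (-(if a = k then (-1 : ℚ) else 1)) * (∑ l, D l * (C l a : ℚ) * (G l k : ℚ))
          + (if a = k then (-1 : ℚ) else 1)
            * (∑ l, D l * (C l a : ℚ) * (∑ p, (G l p : ℚ) * max (-((ε : ℚ) * (B p k : ℚ))) 0))
          + (-(max ((ε : ℚ) * (B k a : ℚ)) 0)) * (∑ l, D l * (C l k : ℚ) * (G l k : ℚ))
          + max ((ε : ℚ) * (B k a : ℚ)) 0
            * (∑ l, D l * (C l k : ℚ) * (∑ p, (G l p : ℚ) * max (-((ε : ℚ) * (B p k : ℚ))) 0)) := by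
      rw [Finset.mul_sum, Finset.mul_sum, Finset.mul_sum, Finset.mul_sum,
        ← Finset.sum_add_distrib, ← Finset.sum_add_distrib, ← Finset.sum_add_distrib]
      refine Finset.sum_congr rfl fun l _ => ?_
      rw [hC', hG'k]
      ring
    rw [expand, hI3, key, hI3, key]
    have hkk : (if k = k then D k else 0) = D k := if_pos rfl
    rw [hkk]
    by_cases hak : a = k
    · simp [hak, hqk, hpk]
    · simp only [if_neg hak]
      rw [hqk]
      linear_combination hsw a
  · have expand : (∑ l, D l * (C' l a : ℚ) * (G' l b : ℚ))
        = ((if a = k then (-1 : ℚ) else 1) * (if b = k then (-1 : ℚ) else 1))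
            * (∑ l, D l * (C l a : ℚ) * (G l b : ℚ))
          + (max ((ε : ℚ) * (B k a : ℚ)) 0 * (if b = k then (-1 : ℚ) else 1))
            * (∑ l, D l * (C l k : ℚ) * (G l b : ℚ)) := by
      rw [Finset.mul_sum, Finset.mul_sum, ← Finset.sum_add_distrib]
      refine Finset.sum_congr rfl fun l _ => ?_
      rw [hC', hG']
      simp only [if_neg hbk]
      ring
    rw [expand, hI3, hI3]
    simp only [if_neg (fun h : k = b => hbk h.symm), mul_zero, add_zero, if_neg hbk]
    by_cases hab : a = b
    · simp only [hab, if_pos rfl, if_neg hbk]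
      ring
    · simp [hab]

lemma step_I4 (C G C' G' : Matrix ι ι ℤ) (ε : ℤ)
    (hD : ∀ i, 0 < D i) (hBkk : B k k = 0)
    (hskew : ∀ i j, D i * (B i j : ℚ) = -(D j * (B j i : ℚ)))
    (hI4 : ∀ l m, (∑ a, (G l a : ℚ) * (C m a : ℚ) / D a) = if l = m then 1 / D l else 0)
    (hC' : ∀ i j, (C' i j : ℚ) = (if j = k then -1 else 1) * (C i j : ℚ)
      + (C i k : ℚ) * max ((ε : ℚ) * (B k j : ℚ)) 0)
    (hG' : ∀ i j, (G' i j : ℚ) = (if j = k then -1 else 1) * (G i j : ℚ)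
      + (if j = k then ∑ p, (G i p : ℚ) * max (-((ε : ℚ) * (B p k : ℚ))) 0 else 0)) :
    ∀ l m, (∑ a, (G' l a : ℚ) * (C' m a : ℚ) / D a) = if l = m then 1 / D l else 0 := by
  have hBkkq : (B k k : ℚ) = 0 := by exact_mod_cast hBkk
  have hqk : max (-((ε : ℚ) * (B k k : ℚ))) 0 = 0 := by rw [hBkkq]; simp
  have hpk : max ((ε : ℚ) * (B k k : ℚ)) 0 = 0 := by rw [hBkkq]; simp
  have hsw : ∀ a, D a * max (-((ε : ℚ) * (B a k : ℚ))) 0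
      = D k * max ((ε : ℚ) * (B k a : ℚ)) 0 := by
    intro a
    apply maxswap (hD a).le (hD k).le
    linear_combination (ε : ℚ) * hskew a k
  intro l m
  have pointwise : ∀ a, (G' l a : ℚ) * (C' m a : ℚ) / D a
      = (G l a : ℚ) * (C m a : ℚ) / D a
        + (C m k : ℚ) / D k * ((G l a : ℚ) * max (-((ε : ℚ) * (B a k : ℚ))) 0)
        + (if a = k then (-((∑ p, (G l p : ℚ) * max (-((ε : ℚ) * (B p k : ℚ))) 0)
            * (C m k : ℚ)) / D k) else 0) := by
    intro a
    rw [hG', hC']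
    by_cases hak : a = k
    · simp only [hak, hqk, hpk, eq_self_iff_true, if_true, mul_zero, add_zero, neg_mul, one_mul,
        zero_mul, zero_add]
      ring
    · simp only [if_neg hak]
      have hpq : max ((ε : ℚ) * (B k a : ℚ)) 0 / D a
          = max (-((ε : ℚ) * (B a k : ℚ))) 0 / D k := by
        rw [div_eq_div_iff (hD a).ne' (hD k).ne']
        linear_combination -hsw a
      calc (1 * (G l a : ℚ) + 0) * (1 * (C m a : ℚ) + (C m k : ℚ)
            * max ((ε : ℚ) * (B k a : ℚ)) 0) / D a
          = (G l a : ℚ) * (C m a : ℚ) / D a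
            + (G l a : ℚ) * (C m k : ℚ) * (max ((ε : ℚ) * (B k a : ℚ)) 0 / D a) := by
            ring
        _ = _ := by rw [hpq]; ring
  rw [Finset.sum_congr rfl fun a _ => pointwise a]
  rw [Finset.sum_add_distrib, Finset.sum_add_distrib]
  rw [Finset.sum_ite_eq' Finset.univ k
    (fun _ => (-((∑ p, (G l p : ℚ) * max (-((ε : ℚ) * (B p k : ℚ))) 0) * (C m k : ℚ)) / D k))]
  rw [← Finset.mul_sum, hI4]
  simp only [Finset.mem_univ, if_pos]
  ring

end Step
lemma step_I2 (B : Matrix ι ι ℤ) (k : ι) (B0 C G C' G' : Matrix ι ι ℤ) (ε : ℤ)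
    (hε : ε = 1 ∨ ε = -1) (hBkk : B k k = 0)
    (hI2 : ∀ i j, (∑ m, B0 i m * C m j) = ∑ m, G i m * B m j)
    (hC' : ∀ i j, C' i j = (if j = k then -1 else 1) * C i j + C i k * max (ε * B k j) 0)
    (hG' : ∀ i j, G' i j = (if j = k then -1 else 1) * G i j +
      (if j = k then ∑ p, G i p * max (-(ε * B p k)) 0 else 0)) :
    ∀ i j, (∑ m, B0 i m * C' m j) = ∑ m, G' i m * (mutate k B) m j := by
  intro i j
  have L : (∑ m, B0 i m * C' m j)
      = (if j = k then -1 else 1) * (∑ m, B0 i m * C m j)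
        + max (ε * B k j) 0 * (∑ m, B0 i m * C m k) := by
    rw [Finset.mul_sum, Finset.mul_sum, ← Finset.sum_add_distrib]
    refine Finset.sum_congr rfl fun m _ => ?_
    rw [hC']
    ring
  have R : (∑ m, G' i m * (mutate k B) m j)
      = (∑ m, (if m = k then -1 else 1) * G i m * (mutate k B) m j)
        + (∑ p, G i p * max (-(ε * B p k)) 0) * (mutate k B) k j := by
    calc (∑ m, G' i m * (mutate k B) m j)
        = ∑ m, ((if m = k then -1 else 1) * G i m * (mutate k B) m j
            + (if m = k then (∑ p, G i p * max (-(ε * B p k)) 0) * (mutate k B) m j else 0)) := by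
          refine Finset.sum_congr rfl fun m _ => ?_
          rw [hG']
          by_cases hmk : m = k <;> simp [hmk] <;> ring
      _ = _ := by
          rw [Finset.sum_add_distrib, Finset.sum_ite_eq' Finset.univ k
            (fun m => (∑ p, G i p * max (-(ε * B p k)) 0) * (mutate k B) m j)]
          simp
  rw [L, hI2, hI2, R]
  have R2 : (∑ m, (if m = k then -1 else 1) * G i m * (mutate k B) m j)
        + (∑ p, G i p * max (-(ε * B p k)) 0) * (mutate k B) k j
      = ∑ m, G i m * ((if m = k then -1 else 1) * (mutate k B) m j
          + max (-(ε * B m k)) 0 * (mutate k B) k j) := by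
    rw [Finset.sum_mul, ← Finset.sum_add_distrib]
    refine Finset.sum_congr rfl fun m _ => ?_
    ring
  rw [R2]
  rw [Finset.mul_sum, Finset.mul_sum, ← Finset.sum_add_distrib]
  refine Finset.sum_congr rfl fun m _ => ?_
  rw [mutate_key B k ε hε hBkk m j]
  ring

-- base cases
lemma base_I2 (B0 : Matrix ι ι ℤ) :
    ∀ i j, (∑ m, B0 i m * (1 : Matrix ι ι ℤ) m j) = ∑ m, (1 : Matrix ι ι ℤ) i m * B0 m j := by
  intro i j
  simp [Matrix.one_apply, mul_ite, ite_mul, Finset.sum_ite_eq, Finset.sum_ite_eq']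

lemma base_I3 (D : ι → ℚ) :
    ∀ a b, (∑ l, D l * ((1 : Matrix ι ι ℤ) l a : ℚ) * ((1 : Matrix ι ι ℤ) l b : ℚ))
      = if a = b then D a else 0 := by
  intro a b
  calc (∑ l, D l * ((1 : Matrix ι ι ℤ) l a : ℚ) * ((1 : Matrix ι ι ℤ) l b : ℚ))
      = ∑ l, (if l = a then (if a = b then D a else 0) else 0) := by
        refine Finset.sum_congr rfl fun l _ => ?_
        by_cases h1 : l = a <;> by_cases h2 : l = b <;>
          simp_all [Matrix.one_apply] <;> tauto
    _ = if a = b then D a else 0 := by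
        rw [Finset.sum_ite_eq' Finset.univ a (fun _ => if a = b then D a else 0)]
        simp

lemma base_I4 (D : ι → ℚ) (hD : ∀ i, 0 < D i) :
    ∀ l m, (∑ a, ((1 : Matrix ι ι ℤ) l a : ℚ) * ((1 : Matrix ι ι ℤ) m a : ℚ) / D a)
      = if l = m then 1 / D l else 0 := by
  intro l m
  calc (∑ a, ((1 : Matrix ι ι ℤ) l a : ℚ) * ((1 : Matrix ι ι ℤ) m a : ℚ) / D a)
      = ∑ a, (if a = l then (if l = m then 1 / D l else 0) else 0) := by
        refine Finset.sum_congr rfl fun a _ => ?_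
        by_cases h1 : a = l <;> by_cases h2 : a = m <;>
          simp_all [Matrix.one_apply] <;> tauto
    _ = if l = m then 1 / D l else 0 := by
        rw [Finset.sum_ite_eq' Finset.univ l (fun _ => if l = m then 1 / D l else 0)]
        simp


lemma diag_zero (D : ι → ℚ) (B : Matrix ι ι ℤ) (hD : ∀ i, 0 < D i)
    (hskew : ∀ i j, D i * (B i j : ℚ) = -(D j * (B j i : ℚ))) (i : ι) : B i i = 0 := by
  have h := hskew i i
  have h2 : D i * (B i i : ℚ) = 0 := by linarith
  rcases mul_eq_zero.mp h2 with h3 | h3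
  · exact absurd h3 (hD i).ne'
  · exact_mod_cast h3

lemma invariants (B0 : Matrix ι ι ℤ) (D : ι → ℚ) (hD : ∀ i, 0 < D i)
    (hskew0 : ∀ i j, D i * (B0 i j : ℚ) = -(D j * (B0 j i : ℚ)))
    (hsc : ∀ w : List ι, ColSignCoherent (Cmat B0 w)) (w : List ι) :
    (∀ i j, D i * (Bmat B0 w i j : ℚ) = -(D j * (Bmat B0 w j i : ℚ))) ∧
    (∀ i j, (∑ m, B0 i m * Cmat B0 w m j) = ∑ m, Gmat B0 w i m * Bmat B0 w m j) ∧
    (∀ a b, (∑ l, D l * (Cmat B0 w l a : ℚ) * (Gmat B0 w l b : ℚ)) = if a = b then D a else 0) ∧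
    (∀ l m, (∑ a, (Gmat B0 w l a : ℚ) * (Cmat B0 w m a : ℚ) / D a)
      = if l = m then 1 / D l else 0) := by
  induction w using List.reverseRecOn with
  | nil => exact ⟨hskew0, base_I2 B0, base_I3 D, base_I4 D hD⟩
  | append_singleton w k ih =>
    obtain ⟨ih1, ih2, ih3, ih4⟩ := ih
    have hBkk : Bmat B0 w k k = 0 := diag_zero D (Bmat B0 w) hD ih1 k
    have main : ∃ ε : ℤ, (ε = 1 ∨ ε = -1) ∧
        (∀ i j, Cmat B0 (w ++ [k]) i j = (if j = k then -1 else 1) * Cmat B0 w i j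
          + Cmat B0 w i k * max (ε * Bmat B0 w k j) 0) ∧
        (∀ i j, Gmat B0 (w ++ [k]) i j = (if j = k then -1 else 1) * Gmat B0 w i j +
          (if j = k then ∑ p, Gmat B0 w i p * max (-(ε * Bmat B0 w p k)) 0 else 0)) := by
      rcases hsc w k with ⟨_, hcol⟩ | ⟨_, hcol⟩
      · refine ⟨1, Or.inl rfl, fun i j => ?_, fun i j => ?_⟩
        · rw [Cmat_concat, Cstep_apply]
          have h0 : max (-Cmat B0 w i k) 0 = 0 := by have := hcol i; simp only at this; omega
          rw [h0, zero_mul, add_zero, one_mul]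
        · rw [Gmat_concat, Gstep_apply]
          congr 1
          by_cases hj : j = k
          · rw [if_pos hj, if_pos hj]
            have h1 : (∑ m, B0 i m * max (-Cmat B0 w m k) 0) = 0 :=
              Finset.sum_eq_zero fun m _ => by
                have := hcol m; simp only at this
                have h0 : max (-Cmat B0 w m k) 0 = 0 := by omega
                rw [h0, mul_zero]
            rw [h1, sub_zero]
            refine Finset.sum_congr rfl fun p _ => ?_
            rw [one_mul]
          · rw [if_neg hj, if_neg hj]
      · refine ⟨-1, Or.inr rfl, fun i j => ?_, fun i j => ?_⟩
        · rw [Cmat_concat, Cstep_apply]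
          have h0 : max (-Cmat B0 w i k) 0 = -Cmat B0 w i k := by
            have := hcol i; simp only at this; omega
          rw [h0]
          have h1 : max (-1 * Bmat B0 w k j) 0 = max (Bmat B0 w k j) 0 - Bmat B0 w k j := by
            omega
          rw [h1]
          ring
        · rw [Gmat_concat, Gstep_apply]
          congr 1
          by_cases hj : j = k
          · rw [if_pos hj, if_pos hj]
            have h1 : (∑ m, B0 i m * max (-Cmat B0 w m k) 0) = -∑ m, B0 i m * Cmat B0 w m k := by
              rw [← Finset.sum_neg_distrib]
              refine Finset.sum_congr rfl fun m _ => ?_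
              have := hcol m; simp only at this
              have h0 : max (-Cmat B0 w m k) 0 = -Cmat B0 w m k := by omega
              rw [h0]; ring
            rw [h1, sub_neg_eq_add, ih2 i k, ← Finset.sum_add_distrib]
            refine Finset.sum_congr rfl fun p _ => ?_
            have h2 : max (-(-1 * Bmat B0 w p k)) 0 = max (-Bmat B0 w p k) 0 + Bmat B0 w p k := by
              omega
            rw [h2]; ring
          · rw [if_neg hj, if_neg hj]
    obtain ⟨ε, hε, hC'z, hG'z⟩ := main
    have hC'q : ∀ i j, ((Cmat B0 (w ++ [k]) i j : ℚ))
        = (if j = k then -1 else 1) * (Cmat B0 w i j : ℚ)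
          + (Cmat B0 w i k : ℚ) * max ((ε : ℚ) * (Bmat B0 w k j : ℚ)) 0 := by
      intro i j
      rw [hC'z]
      by_cases hj : j = k <;> simp [hj] <;> push_cast <;> ring
    have hG'q : ∀ i j, ((Gmat B0 (w ++ [k]) i j : ℚ))
        = (if j = k then -1 else 1) * (Gmat B0 w i j : ℚ)
          + (if j = k then ∑ p, (Gmat B0 w i p : ℚ)
              * max (-((ε : ℚ) * (Bmat B0 w p k : ℚ))) 0 else 0) := by
      intro i j
      rw [hG'z]
      by_cases hj : j = k <;> simp [hj] <;> push_cast <;> ring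
    refine ⟨?_, ?_, ?_, ?_⟩
    · intro i j
      rw [Bmat_concat]
      exact step_skew D (Bmat B0 w) k hD ih1 i j
    · intro i j
      rw [Bmat_concat]
      exact step_I2 (Bmat B0 w) k B0 (Cmat B0 w) (Gmat B0 w) (Cmat B0 (w ++ [k]))
        (Gmat B0 (w ++ [k])) ε hε hBkk ih2 hC'z hG'z i j
    · exact step_I3 D (Bmat B0 w) k (Cmat B0 w) (Gmat B0 w) (Cmat B0 (w ++ [k]))
        (Gmat B0 (w ++ [k])) ε hD hBkk ih1 ih3 hC'q hG'q
    · exact step_I4 D (Bmat B0 w) k (Cmat B0 w) (Gmat B0 w) (Cmat B0 (w ++ [k]))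
        (Gmat B0 (w ++ [k])) ε hD hBkk ih1 ih4 hC'q hG'q


end Lemmas

/-- A `g`-vector with all entries nonnegative is a standard basis vector. -/
theorem gvector_nonneg_eq_std_basis (n : ℕ) (hn : 1 ≤ n)
    (hsc : ∀ B : Matrix (Fin n) (Fin n) ℤ, IsSkewSymmetrizable B →
      ∀ w : List (Fin n), ColSignCoherent (Cmat B w))
    (B0 : Matrix (Fin n) (Fin n) ℤ) (hB0 : IsSkewSymmetrizable B0)
    (w : List (Fin n)) (i : Fin n)
    (hpos : ∀ j, 0 ≤ Gmat B0 w j i) :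
    ∃ ℓ : Fin n, ∀ j, Gmat B0 w j i = if j = ℓ then 1 else 0 := by
  obtain ⟨D, hD, hskew0⟩ := hB0
  obtain ⟨I1, I2, I3, I4⟩ := invariants B0 D hD hskew0 (hsc B0 ⟨D, hD, hskew0⟩) w
  -- there is a nonzero entry
  have hex : ∃ l, Gmat B0 w l i ≠ 0 := by
    by_contra h
    push_neg at h
    have h3 := I3 i i
    rw [if_pos rfl] at h3
    rw [Finset.sum_eq_zero (fun l _ => by rw [h l]; simp)] at h3
    exact (hD i).ne' h3.symm
  obtain ⟨ℓ, hℓ⟩ := hex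
  -- rows at nonzero entries of the g-vector are supported at column i
  have hrow : ∀ l, Gmat B0 w l i ≠ 0 → ∀ a, a ≠ i → Cmat B0 w l a = 0 := by
    intro l hl a ha
    have h3 := I3 a i
    rw [if_neg ha] at h3
    have hGq : (0 : ℚ) < (Gmat B0 w l i : ℚ) := by
      have h1 := hpos l
      have h2 : 0 < Gmat B0 w l i := lt_of_le_of_ne h1 (Ne.symm hl)
      exact_mod_cast h2
    rcases hsc B0 ⟨D, hD, hskew0⟩ w a with ⟨_, hp⟩ | ⟨_, hn⟩
    · have key := (Finset.sum_eq_zero_iff_of_nonneg (fun l _ => ?_)).mp h3 l (Finset.mem_univ l)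
      · have hcz : (Cmat B0 w l a : ℚ) = 0 := by
          rcases mul_eq_zero.mp key with h4 | h4
          · rcases mul_eq_zero.mp h4 with h5 | h5
            · exact absurd h5 (hD l).ne'
            · exact h5
          · exact absurd h4 hGq.ne'
        exact_mod_cast hcz
      · have hc : (0 : ℚ) ≤ (Cmat B0 w l a : ℚ) := by exact_mod_cast hp l
        have hg : (0 : ℚ) ≤ (Gmat B0 w l i : ℚ) := by exact_mod_cast hpos l
        exact mul_nonneg (mul_nonneg (hD l).le hc) hg
    · have key := (Finset.sum_eq_zero_iff_of_nonpos (fun l _ => ?_)).mp h3 l (Finset.mem_univ l)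
      · have hcz : (Cmat B0 w l a : ℚ) = 0 := by
          rcases mul_eq_zero.mp key with h4 | h4
          · rcases mul_eq_zero.mp h4 with h5 | h5
            · exact absurd h5 (hD l).ne'
            · exact h5
          · exact absurd h4 hGq.ne'
        exact_mod_cast hcz
      · have hc : (Cmat B0 w l a : ℚ) ≤ 0 := by exact_mod_cast hn l
        have hg : (0 : ℚ) ≤ (Gmat B0 w l i : ℚ) := by exact_mod_cast hpos l
        nlinarith [mul_nonneg (mul_nonneg (hD l).le (neg_nonneg.mpr hc)) hg]
  -- uniqueness of the nonzero entry
  have huniq : ∀ l, l ≠ ℓ → Gmat B0 w l i = 0 := by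
    intro l hlℓ
    by_contra hl
    have e1 : ∀ (m : Fin n), Gmat B0 w m i ≠ 0 → ∀ m',
        (∑ a, (Gmat B0 w m' a : ℚ) * (Cmat B0 w m a : ℚ) / D a)
          = (Gmat B0 w m' i : ℚ) * (Cmat B0 w m i : ℚ) / D i := by
      intro m hm m'
      refine Finset.sum_eq_single i (fun a _ ha => ?_) (fun h => absurd (Finset.mem_univ i) h)
      rw [hrow m hm a ha]
      simp
    have h1 := I4 ℓ ℓ
    rw [e1 ℓ hℓ ℓ, if_pos rfl] at h1
    have h2 := I4 ℓ l
    rw [e1 l hl ℓ, if_neg (fun h => hlℓ h.symm)] at h2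
    have h3 := I4 l l
    rw [e1 l hl l, if_pos rfl] at h3
    have hCl : (Cmat B0 w l i : ℚ) ≠ 0 := by
      intro h0
      rw [h0, mul_zero, zero_div] at h3
      exact (one_div_ne_zero (hD l).ne') h3.symm
    have hGℓ : (Gmat B0 w ℓ i : ℚ) ≠ 0 := by
      intro h0
      rw [h0, zero_mul, zero_div] at h1
      exact (one_div_ne_zero (hD ℓ).ne') h1.symm
    rcases div_eq_zero_iff.mp h2 with h4 | h4
    · rcases mul_eq_zero.mp h4 with h5 | h5
      · exact hGℓ h5
      · exact hCl h5
    · exact (hD i).ne' h4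
  -- the nonzero entry equals 1, via invertibility over ℤ
  have hmat : ((Cmat B0 w).map (Int.cast : ℤ → ℚ))ᵀ * (Matrix.diagonal D)
      * ((Gmat B0 w).map (Int.cast : ℤ → ℚ)) = Matrix.diagonal D := by
    ext a b
    rw [Matrix.mul_apply]
    simp only [Matrix.mul_diagonal, Matrix.transpose_apply, Matrix.map_apply,
      Matrix.diagonal_apply]
    rw [← I3 a b]
    exact Finset.sum_congr rfl fun l _ => by ring
  have hdet : (Cmat B0 w).det * (Gmat B0 w).det = 1 := by
    have h1 := congrArg Matrix.det hmat
    rw [Matrix.det_mul, Matrix.det_mul, Matrix.det_transpose, Matrix.det_diagonal] at h1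
    have hne : (∏ x, D x) ≠ 0 := ne_of_gt (Finset.prod_pos fun x _ => hD x)
    have hcd : ((Cmat B0 w).map (Int.cast : ℤ → ℚ)).det = ((Cmat B0 w).det : ℚ) :=
      (RingHom.map_det (Int.castRingHom ℚ) (Cmat B0 w)).symm
    have hgd : ((Gmat B0 w).map (Int.cast : ℤ → ℚ)).det = ((Gmat B0 w).det : ℚ) :=
      (RingHom.map_det (Int.castRingHom ℚ) (Gmat B0 w)).symm
    rw [hcd, hgd] at h1
    have h2 : (((Cmat B0 w).det : ℚ) * ((Gmat B0 w).det : ℚ)) * (∏ x, D x)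
        = 1 * (∏ x, D x) := by linear_combination h1
    have h3 := mul_right_cancel₀ hne h2
    exact_mod_cast h3
  have hu : IsUnit (Gmat B0 w).det :=
    IsUnit.of_mul_eq_one _ (by rw [mul_comm] at hdet; exact hdet)
  have hGinv : (Gmat B0 w)⁻¹ * (Gmat B0 w) = 1 := Matrix.nonsing_inv_mul _ hu
  have hii : (∑ l, (Gmat B0 w)⁻¹ i l * Gmat B0 w l i) = 1 := by
    have h5 := congrArg (fun M => M i i) hGinv
    simpa [Matrix.mul_apply, Matrix.one_apply] using h5
  rw [Finset.sum_eq_single ℓ (fun b _ hb => by rw [huniq b hb, mul_zero])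
    (fun h => absurd (Finset.mem_univ ℓ) h)] at hii
  rcases Int.mul_eq_one_iff_eq_one_or_neg_one.mp hii with ⟨_, h6⟩ | ⟨_, h6⟩
  · refine ⟨ℓ, fun j => ?_⟩
    by_cases hj : j = ℓ
    · rw [if_pos hj, hj]; exact h6
    · rw [if_neg hj]; exact huniq j hj
  · have := hpos ℓ
    rw [h6] at this
    norm_num at this


end ClusterPattern
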